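/- For M, N positive integers with min(M,N) = q and α > 0, the minimum of Σ_{i=1}^{q} (M+N+1−2i)·x_i subject to Σ_{i=1}^{q} (α − x_i)^+ ≤ r and 0 ≤ x_1 ≤ x_2 ≤ ⋯ ≤ x_q equals α·d_{M,N}(r/α) for all 0 ≤ r ≤ q·α, where d_{M,N}(·) is the piecewise linear function joining the points (k, (M−k)(N−k)) for integers k = 0, 1, …, q. -/
import Mathlib


lemma sum_coef (M N k : ℕ) (m : ℕ) :
    ∑ i ∈ Finset.range m, ((M:ℝ) + (N:ℝ) - 1 - 2*((k:ℝ) + (i:ℝ))) =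
      ((M:ℝ)-(k:ℝ))*((N:ℝ)-(k:ℝ)) - ((M:ℝ)-((k:ℝ)+(m:ℝ)))*((N:ℝ)-((k:ℝ)+(m:ℝ))) := by
  induction m with
  | zero => simp
  | succ n ih =>
    rw [Finset.sum_range_succ, ih]
    push_cast; ring

lemma sum_split (q k n : ℕ) (hqn : q = k + n + 1) (F : ℕ → ℝ) :
    ∑ i : Fin q, F i.val =
      (∑ i ∈ Finset.range k, F i) + ((∑ i ∈ Finset.range n, F (k + 1 + i)) + F k) := by
  rw [Fin.sum_univ_eq_sum_range, hqn]
  rw [show k + n + 1 = k + (n+1) by ring, Finset.sum_range_add]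
  congr 1
  rw [Finset.sum_range_succ']
  simp only [Nat.add_zero]
  congr 1
  apply Finset.sum_congr rfl; intro i _; congr 1; omega

lemma dmt_helper (M N q k n : ℕ) (α r : ℝ) (hα : 0 < α)
    (hq2 : 2*q ≤ M + N) (hq0 : ((M:ℝ) - (q:ℝ)) * ((N:ℝ) - (q:ℝ)) = 0)
    (hqn : q = k + n + 1)
    (hk1 : (k:ℝ)*α ≤ r) (hk2 : r ≤ ((k:ℝ)+1)*α) :
    IsLeast {y : ℝ | ∃ x : Fin q → ℝ, (∀ i, 0 ≤ x i) ∧ Monotone x ∧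
        (∑ i, max (α - x i) 0) ≤ r ∧
        y = ∑ i, ((M : ℝ) + (N : ℝ) + 1 - 2 * ((i.val : ℝ) + 1)) * x i}
      (α * (((M:ℝ)-(k:ℝ))*((N:ℝ)-(k:ℝ))) - (r - (k:ℝ)*α)*((M:ℝ)+(N:ℝ)-2*(k:ℝ)-1)) := by
  have hqR : (q:ℝ) = (k:ℝ) + (n:ℝ) + 1 := by exact_mod_cast hqn
  constructor
  · -- membership: the optimal point
    set s : ℝ := α*((k:ℝ)+1) - r with hs
    have hs0 : 0 ≤ s := by rw [hs]; nlinarith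
    have hsα : s ≤ α := by rw [hs]; nlinarith
    refine ⟨fun i => if i.val < k then 0 else if i.val = k then s else α, ?_, ?_, ?_, ?_⟩
    · intro i; dsimp only; split_ifs <;> linarith
    · intro i j hij
      have hij' : i.val ≤ j.val := hij
      dsimp only; split_ifs <;> first | linarith | (exfalso; omega)
    · -- the constraint holds with equality
      have hG : ∀ i : Fin q, max (α - (if i.val < k then (0:ℝ) else if i.val = k then s else α)) 0
          = (fun j => if j < k then α else if j = k then r - (k:ℝ)*α else 0) i.val := by
        intro i; dsimp only; split_ifs with h1 h2
        · rw [sub_zero, max_eq_left hα.le]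
        · rw [max_eq_left (by linarith), hs]; ring
        · simp
      rw [Finset.sum_congr rfl (fun i _ => hG i),
        sum_split q k n hqn (fun j => if j < k then α else if j = k then r - (k:ℝ)*α else 0)]
      have e1 : ∑ i ∈ Finset.range k, (if i < k then α else if i = k then r - (k:ℝ)*α else 0) = (k:ℝ)*α := by
        rw [Finset.sum_congr rfl (fun i hi => if_pos (Finset.mem_range.mp hi)),
          Finset.sum_const, Finset.card_range, nsmul_eq_mul]
      have e2 : ∑ i ∈ Finset.range n, (if k+1+i < k then α else if k+1+i = k then r - (k:ℝ)*α else (0:ℝ)) = 0 := by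
        rw [Finset.sum_congr rfl (fun i _ => by rw [if_neg (by omega), if_neg (by omega)]), Finset.sum_const]
        simp
      rw [e1, e2, if_neg (lt_irrefl k), if_pos rfl]
      linarith
    · -- the value of the objective at the optimal point
      have hH : ∀ i : Fin q, ((M : ℝ) + (N : ℝ) + 1 - 2 * ((i.val : ℝ) + 1)) *
            (if i.val < k then (0:ℝ) else if i.val = k then s else α)
          = (fun j => if j < k then 0 else if j = k then ((M:ℝ)+(N:ℝ)-1-2*(k:ℝ))*s
              else ((M:ℝ)+(N:ℝ)-1-2*(j:ℝ))*α) i.val := by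
        intro i; dsimp only; split_ifs with h1 h2
        · ring
        · rw [h2]; push_cast; ring
        · ring
      rw [Finset.sum_congr rfl (fun i _ => hH i),
        sum_split q k n hqn (fun j => if j < k then 0 else if j = k then ((M:ℝ)+(N:ℝ)-1-2*(k:ℝ))*s
              else ((M:ℝ)+(N:ℝ)-1-2*(j:ℝ))*α)]
      have e1 : ∑ i ∈ Finset.range k, (if i < k then (0:ℝ) else if i = k then ((M:ℝ)+(N:ℝ)-1-2*(k:ℝ))*s
              else ((M:ℝ)+(N:ℝ)-1-2*(i:ℝ))*α) = 0 := by
        rw [Finset.sum_congr rfl (fun i hi => if_pos (Finset.mem_range.mp hi)), Finset.sum_const]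
        simp
      have e2 : ∑ i ∈ Finset.range n, (if k+1+i < k then (0:ℝ) else if k+1+i = k then ((M:ℝ)+(N:ℝ)-1-2*(k:ℝ))*s
              else ((M:ℝ)+(N:ℝ)-1-2*((k+1+i:ℕ):ℝ))*α)
          = (((M:ℝ)-((k:ℝ)+1))*((N:ℝ)-((k:ℝ)+1)))*α := by
        rw [Finset.sum_congr rfl (fun i _ => by rw [if_neg (by omega), if_neg (by omega)]),
          ← Finset.sum_mul]
        have h := sum_coef M N (k+1) n
        push_cast at h ⊢
        rw [show ∑ i ∈ Finset.range n, ((M:ℝ)+(N:ℝ)-1-2*((k:ℝ)+1+(i:ℝ)))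
            = ((M:ℝ)-((k:ℝ)+1))*((N:ℝ)-((k:ℝ)+1)) - ((M:ℝ)-((k:ℝ)+1+(n:ℝ)))*((N:ℝ)-((k:ℝ)+1+(n:ℝ))) from by
          rw [← h]]
        rw [show (k:ℝ)+1+(n:ℝ) = (q:ℝ) by rw [hqR]; ring, hq0]
        ring
      rw [e1, e2, if_neg (lt_irrefl k), if_pos rfl, hs]
      ring
  · -- lower bound
    rintro y ⟨x, hx0, -, hxcon, rfl⟩
    set t : Fin q → ℝ := fun i => min (x i) α with ht
    have htsum : (q:ℝ)*α - r ≤ ∑ i, t i := by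
      have h1 : ∀ i : Fin q, α - t i = max (α - x i) 0 := by
        intro i
        rcases le_total (x i) α with h | h
        · rw [ht]; dsimp only; rw [min_eq_left h, max_eq_left (by linarith)]
        · rw [ht]; dsimp only; rw [min_eq_right h, max_eq_right (by linarith)]; ring
      have h2 : ∑ i : Fin q, (α - t i) ≤ r := by
        rw [Finset.sum_congr rfl (fun i _ => h1 i)]; exact hxcon
      rw [Finset.sum_sub_distrib, Finset.sum_const, Finset.card_univ, Fintype.card_fin,
        nsmul_eq_mul] at h2
      linarith
    set c' : ℝ := (M:ℝ)+(N:ℝ)-1-2*(k:ℝ) with hc'def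
    have hc' : 0 < c' := by
      have h : ((2*k+2 : ℕ):ℝ) ≤ ((M+N : ℕ):ℝ) := by exact_mod_cast (by omega : 2*k+2 ≤ M+N)
      push_cast at h
      rw [hc'def]; linarith
    have key : ∀ i : Fin q,
        c' * t i + (if i.val < k then 0 else ((M:ℝ)+(N:ℝ)-1-2*(i.val:ℝ) - c')*α)
          ≤ ((M:ℝ)+(N:ℝ)+1-2*((i.val:ℝ)+1)) * x i := by
      intro i
      have ht0 : 0 ≤ t i := le_min (hx0 i) hα.le
      have htα : t i ≤ α := min_le_right _ _
      have htx : t i ≤ x i := min_le_left _ _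
      have hiq : (i.val:ℝ) + 1 ≤ (q:ℝ) := by exact_mod_cast i.isLt
      have hMN : 2*(q:ℝ) ≤ (M:ℝ)+(N:ℝ) := by exact_mod_cast hq2
      have hci : 0 < (M:ℝ)+(N:ℝ)-1-2*(i.val:ℝ) := by linarith
      split_ifs with h
      · have hik : (i.val:ℝ) + 1 ≤ (k:ℝ) := by exact_mod_cast h
        nlinarith [mul_nonneg (sub_nonneg.2 htx) hci.le, mul_nonneg ht0 (by rw [hc'def]; linarith : (0:ℝ) ≤ ((M:ℝ)+(N:ℝ)-1-2*(i.val:ℝ)) - c')]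
      · have hik : (k:ℝ) ≤ (i.val:ℝ) := by exact_mod_cast not_lt.mp h
        nlinarith [mul_nonneg (sub_nonneg.2 htx) hci.le,
          mul_nonneg (sub_nonneg.2 htα) (by rw [hc'def]; linarith : (0:ℝ) ≤ c' - ((M:ℝ)+(N:ℝ)-1-2*(i.val:ℝ)))]
    have hsum : ∑ i : Fin q, (c' * t i + (if i.val < k then 0 else ((M:ℝ)+(N:ℝ)-1-2*(i.val:ℝ) - c')*α))
        ≤ ∑ i : Fin q, ((M:ℝ)+(N:ℝ)+1-2*((i.val:ℝ)+1)) * x i :=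
      Finset.sum_le_sum (fun i _ => key i)
    rw [Finset.sum_add_distrib, ← Finset.mul_sum] at hsum
    have hD : ∑ i : Fin q, (if i.val < k then (0:ℝ) else ((M:ℝ)+(N:ℝ)-1-2*(i.val:ℝ) - c')*α)
        = (((M:ℝ)-((k:ℝ)+1))*((N:ℝ)-((k:ℝ)+1)) - (n:ℝ)*c')*α := by
      rw [sum_split q k n hqn (fun j => if j < k then (0:ℝ) else ((M:ℝ)+(N:ℝ)-1-2*(j:ℝ) - c')*α)]
      have e1 : ∑ i ∈ Finset.range k, (if i < k then (0:ℝ) else ((M:ℝ)+(N:ℝ)-1-2*(i:ℝ) - c')*α) = 0 := by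
        rw [Finset.sum_congr rfl (fun i hi => if_pos (Finset.mem_range.mp hi)), Finset.sum_const]
        simp
      have e2 : ∑ i ∈ Finset.range n, (if k+1+i < k then (0:ℝ) else ((M:ℝ)+(N:ℝ)-1-2*((k+1+i:ℕ):ℝ) - c')*α)
          = (((M:ℝ)-((k:ℝ)+1))*((N:ℝ)-((k:ℝ)+1)) - (n:ℝ)*c')*α := by
        rw [Finset.sum_congr rfl (fun i _ => if_neg (by omega))]
        have h := sum_coef M N (k+1) n
        push_cast at h ⊢
        rw [show ∑ i ∈ Finset.range n, (((M:ℝ)+(N:ℝ)-1-2*((k:ℝ)+1+(i:ℝ)) - c')*α)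
            = ((∑ i ∈ Finset.range n, ((M:ℝ)+(N:ℝ)-1-2*((k:ℝ)+1+(i:ℝ)))) - (n:ℝ)*c')*α from by
          simp only [sub_mul, Finset.sum_sub_distrib, Finset.sum_const, Finset.card_range,
            nsmul_eq_mul, Finset.sum_mul]
          ring]
        rw [h, show (k:ℝ)+1+(n:ℝ) = (q:ℝ) by rw [hqR]; ring, hq0]
        ring
      rw [e1, e2, if_neg (lt_irrefl k)]
      rw [hc'def]; push_cast; ring
    rw [hD] at hsum
    have hmul : c' * ((q:ℝ)*α - r) ≤ c' * ∑ i, t i := mul_le_mul_of_nonneg_left htsum hc'.le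
    have hfin : α * (((M:ℝ)-(k:ℝ))*((N:ℝ)-(k:ℝ))) - (r - (k:ℝ)*α)*((M:ℝ)+(N:ℝ)-2*(k:ℝ)-1)
        = c' * ((q:ℝ)*α - r) + (((M:ℝ)-((k:ℝ)+1))*((N:ℝ)-((k:ℝ)+1)) - (n:ℝ)*c')*α := by
      rw [hc'def, hqR]; ring
    linarith


/-- The classical MIMO point-to-point DMT curve: the piecewise linear function
joining the points `(k, (M−k)(N−k))` for integers `k ∈ [0, min M N]`. -/
noncomputable def dmtCurve (M N : ℕ) (r : ℝ) : ℝ :=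
  ((M : ℝ) - ⌊r⌋) * ((N : ℝ) - ⌊r⌋) - (r - ⌊r⌋) * ((M : ℝ) + (N : ℝ) - 2 * ⌊r⌋ - 1)

/-- The diversity–multiplexing tradeoff linear program: for `q = min(M,N)` and `α > 0`,
the minimum of `∑ (M+N+1−2i)·xᵢ` over `0 ≤ x₁ ≤ ⋯ ≤ x_q` with
`∑ (α − xᵢ)⁺ ≤ r` equals `α · d_{M,N}(r/α)` for `0 ≤ r ≤ q·α`. -/
theorem dmt_linear_program (M N : ℕ) (hM : 0 < M) (hN : 0 < N)
    (q : ℕ) (hq : q = min M N) (α : ℝ) (hα : 0 < α)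
    (r : ℝ) (hr0 : 0 ≤ r) (hr1 : r ≤ (q : ℝ) * α) :
    IsLeast {y : ℝ | ∃ x : Fin q → ℝ, (∀ i, 0 ≤ x i) ∧ Monotone x ∧
        (∑ i, max (α - x i) 0) ≤ r ∧
        y = ∑ i, ((M : ℝ) + (N : ℝ) + 1 - 2 * ((i.val : ℝ) + 1)) * x i}
      (α * dmtCurve M N (r / α)) := by
  have hq1 : 1 ≤ q := by omega
  have hq2 : 2*q ≤ M + N := by omega
  have hq0 : ((M:ℝ) - (q:ℝ)) * ((N:ℝ) - (q:ℝ)) = 0 := by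
    rcases Nat.le_total M N with h | h
    · have hqM : q = M := by omega
      rw [hqM]; ring
    · have hqN : q = N := by omega
      rw [hqN]; ring
  have hραr : (r/α) * α = r := div_mul_cancel₀ r hα.ne'
  have hρ0 : 0 ≤ r/α := div_nonneg hr0 hα.le
  have hρq : r/α ≤ (q:ℝ) := (div_le_iff₀ hα).2 hr1
  set k : ℕ := min (⌊r/α⌋.toNat) (q - 1) with hk
  have hfl : ((⌊r/α⌋.toNat : ℕ):ℝ) = (⌊r/α⌋:ℝ) := by
    exact_mod_cast Int.toNat_of_nonneg (Int.floor_nonneg.2 hρ0)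
  have hkρ : (k:ℝ) ≤ r/α := by
    have h1 : (k:ℝ) ≤ (⌊r/α⌋.toNat:ℝ) := by exact_mod_cast min_le_left _ _
    calc (k:ℝ) ≤ (⌊r/α⌋.toNat:ℝ) := h1
      _ = (⌊r/α⌋:ℝ) := hfl
      _ ≤ r/α := Int.floor_le _
  have hk1 : (k:ℝ)*α ≤ r := by nlinarith
  have hkq : k < q := by omega
  set n : ℕ := q - 1 - k with hn
  have hqn : q = k + n + 1 := by omega
  have hk2 : r ≤ ((k:ℝ)+1)*α := by
    rcases le_or_gt (⌊r/α⌋.toNat) (q-1) with h | h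
    · have hkk : k = ⌊r/α⌋.toNat := by omega
      have hlt : r/α < (k:ℝ)+1 := by
        rw [hkk, hfl]; exact_mod_cast Int.lt_floor_add_one (r/α)
      nlinarith
    · have he : (k:ℝ)+1 = (q:ℝ) := by exact_mod_cast (by omega : k+1 = q)
      rw [he]; linarith
  have hmain := dmt_helper M N q k n α r hα hq2 hq0 hqn hk1 hk2
  have hval : α * dmtCurve M N (r/α)
      = α * (((M:ℝ)-(k:ℝ))*((N:ℝ)-(k:ℝ))) - (r - (k:ℝ)*α)*((M:ℝ)+(N:ℝ)-2*(k:ℝ)-1) := by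
    unfold dmtCurve
    rcases le_or_gt (⌊r/α⌋.toNat) (q-1) with h | h
    · have hkk : k = ⌊r/α⌋.toNat := by omega
      have hflk : ((⌊r/α⌋:ℤ):ℝ) = (k:ℝ) := by rw [hkk, ← hfl]
      rw [hflk]
      linear_combination (-((M:ℝ)+(N:ℝ)-2*(k:ℝ)-1)) * hραr
    · -- here r/α = q exactly
      have hqfl : ((q:ℕ):ℤ) ≤ ⌊r/α⌋ := by omega
      have hρeq : r/α = (q:ℝ) := by
        have h2 : ((q:ℕ):ℝ) ≤ (⌊r/α⌋:ℝ) := by exact_mod_cast hqfl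
        have h3 := Int.floor_le (r/α)
        linarith
      have hflq : ((⌊r/α⌋:ℤ):ℝ) = (q:ℝ) := by
        rw [hρeq, Int.floor_natCast]; push_cast; ring
      have hkq1 : (k:ℝ) = (q:ℝ) - 1 := by
        have : k + 1 = q := by omega
        have := congrArg (fun m : ℕ => (m:ℝ)) this
        push_cast at this; linarith
      have hrq : r = (q:ℝ)*α := by rw [← hραr, hρeq]
      rw [hflq, hρeq, hrq, hkq1]
      ring
  rw [hval]
  exact hmain
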